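/- Let r : [a,b] → ℝ be a bounded nonnegative L¹ function with ∫_a^b r > 0, and define the trajectory-balance target: for a three-step chain with deterministic factorization, if forward transition densities p_F satisfy Z · p_F(s₀,s₁) p_F(s₁,s₂) p_F(s₂,x) = r(x) · p_B(x,s₂) p_B(s₂,s₁) p_B(s₁,s₀) for all trajectories (s₀,s₁,s₂,x) with Z = ∫_a^b r, and each p_F(s,·) and p_B(s,·) is a probability density, then the marginal density of the terminal state x under forward sampling equals r(x)/Z. -/
import Mathlib


open MeasureTheory intervalIntegral

lemma swap_aux (a b : ℝ) (hab : a ≤ b) (f : ℝ → ℝ → ℝ)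
    (hf : Continuous (Function.uncurry f)) :
    (∫ x in a..b, ∫ y in a..b, f x y) = ∫ y in a..b, ∫ x in a..b, f x y := by
  simp only [intervalIntegral.integral_of_le hab]
  apply MeasureTheory.integral_integral_swap
  rw [Measure.prod_restrict]
  apply (hf.continuousOn.integrableOn_compact (isCompact_Icc.prod isCompact_Icc)).mono_set
  exact Set.prod_mono Set.Ioc_subset_Icc_self Set.Ioc_subset_Icc_self

theorem stmt_16 (a b : ℝ) (hab : a < b) (r : ℝ → ℝ) (hr0 : ∀ x, 0 ≤ r x)
    (hrI : IntervalIntegrable r volume a b) (hZ : 0 < ∫ y in a..b, r y)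
    (pF pB : ℝ → ℝ → ℝ) (s₀ : ℝ)
    (hpFc : Continuous fun q : ℝ × ℝ => pF q.1 q.2)
    (hpBc : Continuous fun q : ℝ × ℝ => pB q.1 q.2)
    (hpF0 : ∀ s t, 0 ≤ pF s t) (hpB0 : ∀ s t, 0 ≤ pB s t)
    (hpF1 : ∀ s, (∫ t in a..b, pF s t) = 1)
    (hpB1 : ∀ s, (∫ t in a..b, pB s t) = 1)
    (hpBs₀ : ∀ s₁, pB s₁ s₀ = 1)
    (hTB : ∀ s₁ ∈ Set.Icc a b, ∀ s₂ ∈ Set.Icc a b, ∀ x ∈ Set.Icc a b,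
      (∫ y in a..b, r y) * (pF s₀ s₁ * pF s₁ s₂ * pF s₂ x)
        = r x * (pB x s₂ * pB s₂ s₁ * pB s₁ s₀)) :
    ∀ x ∈ Set.Icc a b,
      (∫ s₁ in a..b, ∫ s₂ in a..b, pF s₀ s₁ * pF s₁ s₂ * pF s₂ x)
        = r x / (∫ y in a..b, r y) := by
  intro x hx
  set Z := ∫ y in a..b, r y with hZdef
  have hZ0 : Z ≠ 0 := ne_of_gt hZ
  have hIcc : Set.uIcc a b = Set.Icc a b := Set.uIcc_of_le hab.le
  have key : Set.EqOn (fun s₁ => ∫ s₂ in a..b, pF s₀ s₁ * pF s₁ s₂ * pF s₂ x)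
      (fun s₁ => ∫ s₂ in a..b, r x / Z * (pB x s₂ * pB s₂ s₁)) (Set.uIcc a b) := by
    intro s₁ h₁
    rw [hIcc] at h₁
    apply intervalIntegral.integral_congr
    intro s₂ h₂
    rw [hIcc] at h₂
    have h := hTB s₁ h₁ s₂ h₂ x hx
    rw [hpBs₀, mul_one] at h
    field_simp
    linarith
  rw [intervalIntegral.integral_congr key]
  simp only [intervalIntegral.integral_const_mul]
  rw [swap_aux a b hab.le (fun s₁ s₂ => pB x s₂ * pB s₂ s₁)
    (by
      have h1 : Continuous fun q : ℝ × ℝ => pB x q.2 :=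
        hpBc.comp (continuous_const.prodMk continuous_snd)
      have h2 : Continuous fun q : ℝ × ℝ => pB q.2 q.1 :=
        hpBc.comp (continuous_snd.prodMk continuous_fst)
      exact h1.mul h2)]
  have inner : ∀ s₂, (∫ s₁ in a..b, pB x s₂ * pB s₂ s₁) = pB x s₂ := by
    intro s₂
    rw [intervalIntegral.integral_const_mul, hpB1, mul_one]
  simp only [inner, hpB1 x, mul_one]
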